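/- arXiv:1609.08527 — 5 statements merged into one kernel-verified Lean document; each statement's English description precedes it below -/
import Mathlib

section
/- Let u = e^{iυ}, v = e^{iφ} with υ < φ < υ + 2π, and ρ = exp(i(υ+φ+π)/2). Then (1/4)·((u-v)/(uv))·(1+ρ)² = 2 sin((φ-υ)/2) cos²((υ+φ+π)/4), which is a nonnegative real number. -/
open Complex

theorem stmt_2 (υ φ : ℝ) (hlt : υ < φ) (hlt2 : φ < υ + 2 * Real.pi)
    (u v ρ : ℂ)
    (hu : u = Complex.exp (Complex.I * υ))
    (hv : v = Complex.exp (Complex.I * φ))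
    (hρ : ρ = Complex.exp (Complex.I * ((υ + φ + Real.pi) / 2))) :
    (1 / 4) * ((u - v) / (u * v)) * (1 + ρ) ^ 2
      = (2 * Real.sin ((φ - υ) / 2) * Real.cos ((υ + φ + Real.pi) / 4) ^ 2 : ℝ) ∧
    0 ≤ 2 * Real.sin ((φ - υ) / 2) * Real.cos ((υ + φ + Real.pi) / 4) ^ 2 := by
  have hπ := Real.pi_pos
  constructor
  · subst hu hv hρ
    set g : ℂ := Complex.exp (Complex.I * ((↑υ + ↑φ + ↑Real.pi)/4)) with hg
    set h : ℂ := Complex.exp (Complex.I * ((↑φ - ↑υ)/4)) with hh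
    have hg0 : g ≠ 0 := Complex.exp_ne_zero _
    have hh0 : h ≠ 0 := Complex.exp_ne_zero _
    have hI : Complex.exp (Complex.I * (↑Real.pi/2)) = Complex.I := by
      rw [mul_comm, show ((Real.pi : ℂ)/2) = ((Real.pi/2 : ℝ) : ℂ) by push_cast; ring,
        Complex.exp_mul_I, ← Complex.ofReal_cos, ← Complex.ofReal_sin,
        Real.cos_pi_div_two, Real.sin_pi_div_two]
      simp
    have hg2 : g ^ 2 = Complex.exp (Complex.I * ((↑υ + ↑φ + ↑Real.pi)/2)) := by
      rw [hg, ← Complex.exp_nat_mul]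
      ring_nf
    have hh2 : h ^ 2 = Complex.exp (Complex.I * ((↑φ - ↑υ)/2)) := by
      rw [hh, ← Complex.exp_nat_mul]
      ring_nf
    have hmI : Complex.exp (-(Complex.I * (↑Real.pi/2))) = -Complex.I := by
      rw [Complex.exp_neg, hI, Complex.inv_I]
    have hEu : Complex.exp (Complex.I * ↑υ) = g ^ 2 * (h ^ 2)⁻¹ * (-Complex.I) := by
      rw [hg2, hh2, ← Complex.exp_neg, ← hmI, ← Complex.exp_add, ← Complex.exp_add]
      congr 1
      ring
    have hEv : Complex.exp (Complex.I * ↑φ) = g ^ 2 * h ^ 2 * (-Complex.I) := by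
      rw [hg2, hh2, ← hmI, ← Complex.exp_add, ← Complex.exp_add]
      congr 1
      ring
    push_cast
    rw [Complex.sin, Complex.cos]
    have e1 : Complex.exp (↑((φ - υ)/2) * Complex.I) = h ^ 2 := by
      rw [hh2]; congr 1; push_cast; ring
    have e2 : Complex.exp (-(↑((φ - υ)/2) : ℂ) * Complex.I) = (h ^ 2)⁻¹ := by
      rw [neg_mul, Complex.exp_neg, e1]
    have e3 : Complex.exp (↑((υ + φ + Real.pi)/4) * Complex.I) = g := by
      rw [hg]; congr 1; push_cast; ring
    have e4 : Complex.exp (-(↑((υ + φ + Real.pi)/4) : ℂ) * Complex.I) = g⁻¹ := by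
      rw [neg_mul, Complex.exp_neg, e3]
    push_cast at e1 e2 e3 e4
    rw [hEu, hEv, ← hg2, e1, e2, e3, e4]
    have hI0 : Complex.I ≠ 0 := Complex.I_ne_zero
    clear_value g h
    field_simp
    linear_combination (4 * (h ^ 4 - 1) * (1 + g ^ 2) ^ 2) *
      Complex.I_sq
  · have h1 : 0 ≤ Real.sin ((φ - υ) / 2) := by
      apply Real.sin_nonneg_of_nonneg_of_le_pi <;> linarith
    positivity
end

section
/- Let u = e^{iυ}, v = e^{iφ} with υ < φ < υ + 2π, ρ = exp(i(υ+φ+π)/2), μ = (1/2)(1-ρ^{-1})(u+v). Then μ²/ρ is a nonnegative real number and μ² - 4ρ ∈ ℝ_{≤0}·ρ, i.e., (μ² - 4ρ)/ρ is a nonpositive real number. -/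
open Complex

theorem stmt_6 (υ φ : ℝ) (hlt : υ < φ) (hlt2 : φ < υ + 2 * Real.pi)
    (u v ρ μ : ℂ)
    (hu : u = Complex.exp (Complex.I * υ))
    (hv : v = Complex.exp (Complex.I * φ))
    (hρ : ρ = Complex.exp (Complex.I * ((υ + φ + Real.pi) / 2)))
    (hμ : μ = (1 / 2) * (1 - ρ⁻¹) * (u + v)) :
    (∃ r : ℝ, 0 ≤ r ∧ μ ^ 2 / ρ = (r : ℂ)) ∧
    (∃ s : ℝ, s ≤ 0 ∧ (μ ^ 2 - 4 * ρ) / ρ = (s : ℂ)) := by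
  set x : ℂ := Complex.exp (Complex.I * (υ / 2)) with hx
  set y : ℂ := Complex.exp (Complex.I * (φ / 2)) with hy
  have hx0 : x ≠ 0 := Complex.exp_ne_zero _
  have hy0 : y ≠ 0 := Complex.exp_ne_zero _
  have hI : Complex.exp (Complex.I * ((Real.pi : ℂ) / 2)) = Complex.I := by
    have h2 : ((Real.pi : ℂ)) / 2 = ((Real.pi / 2 : ℝ) : ℂ) := by push_cast; ring
    rw [mul_comm, Complex.exp_mul_I, h2, ← Complex.ofReal_cos, ← Complex.ofReal_sin,
      Real.cos_pi_div_two, Real.sin_pi_div_two]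
    simp
  have hu2 : u = x ^ 2 := by
    rw [hu, hx, sq, ← Complex.exp_add]; congr 1; push_cast; ring
  have hv2 : v = y ^ 2 := by
    rw [hv, hy, sq, ← Complex.exp_add]; congr 1; push_cast; ring
  have hρ2 : ρ = Complex.I * (x * y) := by
    have harg : Complex.I * (((υ : ℂ) + φ + Real.pi) / 2)
        = Complex.I * ((υ : ℂ) / 2) + Complex.I * ((φ : ℂ) / 2)
          + Complex.I * ((Real.pi : ℂ) / 2) := by push_cast; ring
    rw [hρ, harg, Complex.exp_add, Complex.exp_add, hI, hx, hy]; ring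
  set c : ℝ := Real.cos ((φ - υ) / 2) with hc
  set s : ℝ := Real.sin ((υ + φ) / 2) with hs
  have e1 : Complex.exp ((((φ - υ) / 2 : ℝ) : ℂ) * Complex.I) = y * x⁻¹ := by
    rw [hx, hy, ← Complex.exp_neg, ← Complex.exp_add]; congr 1; push_cast; ring
  have e1' : Complex.exp (-(((φ - υ) / 2 : ℝ) : ℂ) * Complex.I) = x * y⁻¹ := by
    rw [hx, hy, ← Complex.exp_neg, ← Complex.exp_add]
    congr 1; push_cast; ring
  have e2 : Complex.exp ((((υ + φ) / 2 : ℝ) : ℂ) * Complex.I) = x * y := by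
    rw [hx, hy, ← Complex.exp_add]; congr 1; push_cast; ring
  have e2' : Complex.exp (-(((υ + φ) / 2 : ℝ) : ℂ) * Complex.I) = x⁻¹ * y⁻¹ := by
    rw [hx, hy]
    simp only [← Complex.exp_neg, ← Complex.exp_add]
    congr 1; push_cast; ring
  have hI0 : Complex.I ≠ 0 := Complex.I_ne_zero
  have hcc : (c : ℂ) = (x ^ 2 + y ^ 2) / (2 * x * y) := by
    rw [hc, Complex.ofReal_cos, Complex.cos, e1, e1']
    field_simp
    ring
  have hss : (s : ℂ) = ((x * y) ^ 2 - 1) / (2 * Complex.I * (x * y)) := by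
    rw [hs, Complex.ofReal_sin, Complex.sin, e2, e2']
    field_simp
    linear_combination (1 - x ^ 2 * y ^ 2) * Complex.I_sq
  have hρ0 : ρ ≠ 0 := by
    rw [hρ2]
    exact mul_ne_zero hI0 (mul_ne_zero hx0 hy0)
  have hinv : (Complex.I * (x * y))⁻¹ = -Complex.I * (x * y)⁻¹ := by
    rw [mul_inv, Complex.inv_I]; try ring
  have hμ2 : μ = (c : ℂ) * (x * y + Complex.I) := by
    rw [hμ, hu2, hv2, hρ2, hinv, hcc]
    field_simp
    try ring
  have hI2 : Complex.I ^ 2 = -1 := Complex.I_sq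
  have key : μ ^ 2 / ρ = ((2 * c ^ 2 * (1 + s) : ℝ) : ℂ) := by
    rw [hμ2, hρ2]
    push_cast
    rw [hss]
    field_simp
    linear_combination (c : ℂ) ^ 2 * Complex.I_sq
  -- bounds
  have hc0 : (0:ℝ) ≤ c ^ 2 := sq_nonneg _
  have hs1 : -1 ≤ s := Real.neg_one_le_sin _
  have hs2 : s ≤ 1 := Real.sin_le_one _
  have hc1 : c ^ 2 ≤ 1 := by
    have := Real.neg_one_le_cos ((φ - υ) / 2)
    have := Real.cos_le_one ((φ - υ) / 2)
    nlinarith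
  refine ⟨⟨2 * c ^ 2 * (1 + s), by nlinarith, key⟩,
    ⟨2 * c ^ 2 * (1 + s) - 4, by nlinarith, ?_⟩⟩
  have h4 : (μ ^ 2 - 4 * ρ) / ρ = μ ^ 2 / ρ - 4 := by
    field_simp
  rw [h4, key]
  push_cast
  ring
end

section
/- Let α ∈ ℝ and define H(z) = Im(-z - 1/z + iα log z) on the unit circle minus a branch cut. Then for z ∈ ∂𝔻, the outward normal derivative ∂_ν H(z) = (z∂ + z̄∂̄)H(z) equals α - 2 sin(arg z). Consequently, if α = 2 then ∂_ν H > 0 on ∂𝔻 \ {i}, and if α = -2 then ∂_ν H < 0 on ∂𝔻 \ {-i}. -/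
open Complex

/-- The outward normal (radial) derivative of
`H(z) = Im (-z - 1/z + iα log z)` on the unit circle, computed along the ray
`r ↦ r e^{iθ}`, equals `α - 2 sin θ`; consequently it is positive on
`∂𝔻 \ {i}` when `α = 2` and negative on `∂𝔻 \ {-i}` when `α = -2`. -/
theorem stmt_9 (α : ℝ) (θ : ℝ)
    (H : ℝ → ℝ)
    (hH : ∀ r : ℝ, 0 < r →
      H r = Complex.im (-(r * Complex.exp (Complex.I * θ))
        - 1 / (r * Complex.exp (Complex.I * θ))
        + Complex.I * α * (Real.log r + Complex.I * θ))) :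
    deriv H 1 = α - 2 * Real.sin θ ∧
    (α = 2 → Complex.exp (Complex.I * θ) ≠ Complex.I → 0 < deriv H 1) ∧
    (α = -2 → Complex.exp (Complex.I * θ) ≠ -Complex.I → deriv H 1 < 0) := by
  set g : ℝ → ℝ := fun r => -r * Real.sin θ + Real.sin θ / r + α * Real.log r with hg
  have key : ∀ r : ℝ, 0 < r → H r = g r := by
    intro r hr
    rw [hH r hr, hg]
    rw [mul_comm Complex.I (θ:ℂ), Complex.exp_mul_I]
    have hr' : (r:ℂ) ≠ 0 := by exact_mod_cast hr.ne'
    rw [← Complex.ofReal_cos, ← Complex.ofReal_sin]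
    simp [Complex.ext_iff, Complex.div_im, Complex.normSq]
    ring_nf
    rw [show (Complex.sin θ).re = Real.sin θ by simp [← Complex.ofReal_sin],
        show (Complex.cos θ).re = Real.cos θ by simp [← Complex.ofReal_cos],
        Real.sin_sq_add_cos_sq]
    field_simp
  have heq : H =ᶠ[nhds (1:ℝ)] g := by
    filter_upwards [Ioi_mem_nhds (zero_lt_one)] with r hr using key r hr
  have hderiv : HasDerivAt g (α - 2 * Real.sin θ) 1 := by
    have h1 : HasDerivAt (fun r : ℝ => -r * Real.sin θ) (-Real.sin θ) 1 := by
      simpa using ((hasDerivAt_id (1:ℝ)).neg.mul_const (Real.sin θ))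
    have h2 : HasDerivAt (fun r : ℝ => Real.sin θ / r) (-Real.sin θ) 1 := by
      have := (hasDerivAt_inv (one_ne_zero : (1:ℝ) ≠ 0)).const_mul (Real.sin θ)
      simpa [div_eq_mul_inv] using this
    have h3 : HasDerivAt (fun r : ℝ => α * Real.log r) α 1 := by
      simpa using (Real.hasDerivAt_log (one_ne_zero)).const_mul α
    have := (h1.add h2).add h3
    exact this.congr_deriv (by ring)
  have hd : deriv H 1 = α - 2 * Real.sin θ := by
    rw [heq.deriv_eq]
    exact hderiv.deriv
  refine ⟨hd, ?_, ?_⟩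
  · intro hα hne
    rw [hd, hα]
    have hsin : Real.sin θ < 1 := by
      rcases lt_or_eq_of_le (Real.sin_le_one θ) with h | h
      · exact h
      · exfalso
        apply hne
        have hcos : Real.cos θ = 0 := by
          nlinarith [Real.sin_sq_add_cos_sq θ]
        rw [mul_comm Complex.I (θ:ℂ), Complex.exp_mul_I]
        simp [← Complex.ofReal_sin, ← Complex.ofReal_cos, hcos, h]
    linarith
  · intro hα hne
    rw [hd, hα]
    have hsin : -1 < Real.sin θ := by
      rcases lt_or_eq_of_le (Real.neg_one_le_sin θ) with h | h
      · exact h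
      · exfalso
        apply hne
        have hcos : Real.cos θ = 0 := by
          nlinarith [Real.sin_sq_add_cos_sq θ]
        rw [mul_comm Complex.I (θ:ℂ), Complex.exp_mul_I]
        simp [← Complex.ofReal_sin, ← Complex.ofReal_cos, hcos, ← h]
    linarith
end

section
/- Define F(z,φ) = (1/2)(1-z²)^{1/4}(√(1+z)(cos(φ/2) - sin(φ/2)) + √(1-z)(cos(φ/2) + sin(φ/2))) for z ∈ (-1,1) and φ ∈ ℝ. Then for all such (z,φ) with F_{zz}(z,φ) ≠ 0, (2 F_z(z,φ)·z - 2 F_φ(z,φ)·z/√(1-z²) - F(z,φ)) / F_{zz}(z,φ) = (4/3)(1 - z²). -/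
open Real

lemma aux_deriv (p q c d x : ℝ) (h1 : 0 < 1 + x) (h2 : 0 < 1 - x) :
    HasDerivAt (fun t : ℝ => (1+t) ^ p * (1-t) ^ q * (c + d * t))
      ((1+x)^(p-1) * (1-x)^(q-1) *
        ((p*(1-x) - q*(1+x))*(c + d*x) + (1+x)*(1-x)*d)) x := by
  have ha : HasDerivAt (fun t : ℝ => (1+t) ^ p) (p * (1+x)^(p-1)) x := by
    have h := (Real.hasDerivAt_rpow_const (x := 1+x) (p := p) (Or.inl h1.ne')).comp x
      ((hasDerivAt_id x).const_add 1)
    simpa [Function.comp_def] using h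
  have hb : HasDerivAt (fun t : ℝ => (1-t) ^ q) (-(q * (1-x)^(q-1))) x := by
    have h := (Real.hasDerivAt_rpow_const (x := 1-x) (p := q) (Or.inl h2.ne')).comp x
      ((hasDerivAt_id x).const_sub 1)
    simpa [Function.comp_def] using h
  have hc : HasDerivAt (fun t : ℝ => c + d * t) d x := by
    simpa using ((hasDerivAt_id x).const_mul d).const_add c
  have h := (ha.mul hb).mul hc
  have hp : (1+x) ^ p = (1+x)^(p-1) * (1+x) := by
    conv_lhs => rw [show p = (p-1)+1 by ring]
    exact Real.rpow_add_one h1.ne' (p-1)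
  have hq : (1-x) ^ q = (1-x)^(q-1) * (1-x) := by
    conv_lhs => rw [show q = (q-1)+1 by ring]
    exact Real.rpow_add_one h2.ne' (q-1)
  refine HasDerivAt.congr_deriv h ?_
  simp only [Pi.mul_apply]; rw [hp, hq]; ring

lemma rpow_quarter (x : ℝ) (hx : 0 < x) (c : ℝ) (k : ℕ) (hck : c * 4 = k) :
    x ^ c = (x ^ ((1:ℝ)/4)) ^ k := by
  rw [← Real.rpow_natCast (x ^ ((1:ℝ)/4)) k, ← Real.rpow_mul hx.le]
  congr 1; linarith

lemma rpow_neg_quarter (x : ℝ) (hx : 0 < x) (c : ℝ) (k : ℕ) (hck : c * 4 = -(k:ℝ)) :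
    x ^ c = ((x ^ ((1:ℝ)/4)) ^ k)⁻¹ := by
  rw [← Real.rpow_natCast (x ^ ((1:ℝ)/4)) k, ← Real.rpow_mul hx.le, ← Real.rpow_neg hx.le]
  congr 1; linarith

/-- The observable `F(z,φ)` and the SLE drift computation: the combination of
partial derivatives of `F` equals `(4/3)(1 - z²)` whenever `F_zz ≠ 0`. -/
theorem stmt_10
    (F : ℝ → ℝ → ℝ)
    (hF : ∀ z φ : ℝ, F z φ =
      (1 / 2) * (1 - z ^ 2) ^ ((1 : ℝ) / 4) *
        (Real.sqrt (1 + z) * (Real.cos (φ / 2) - Real.sin (φ / 2)) +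
         Real.sqrt (1 - z) * (Real.cos (φ / 2) + Real.sin (φ / 2)))) :
    ∀ z φ : ℝ, -1 < z → z < 1 →
      deriv (deriv (fun z' => F z' φ)) z ≠ 0 →
      (2 * deriv (fun z' => F z' φ) z * z
        - 2 * deriv (fun φ' => F z φ') φ * z / Real.sqrt (1 - z ^ 2)
        - F z φ) / deriv (deriv (fun z' => F z' φ)) z
      = (4 / 3) * (1 - z ^ 2) := by
  intro z φ hz1 hz2 hne
  have hu : (0:ℝ) < 1 + z := by linarith
  have hv : (0:ℝ) < 1 - z := by linarith
  set A : ℝ := Real.cos (φ/2) - Real.sin (φ/2) with hA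
  set B : ℝ := Real.cos (φ/2) + Real.sin (φ/2) with hB
  set g : ℝ → ℝ := fun x =>
    (1+x)^((3:ℝ)/4) * (1-x)^((1:ℝ)/4) * (A/2 + 0*x)
      + (1+x)^((1:ℝ)/4) * (1-x)^((3:ℝ)/4) * (B/2 + 0*x) with hg
  set g1 : ℝ → ℝ := fun x =>
    (1+x)^((3:ℝ)/4-1) * (1-x)^((1:ℝ)/4-1) * (A/4 + (-(A/2))*x)
      + (1+x)^((1:ℝ)/4-1) * (1-x)^((3:ℝ)/4-1) * (-(B/4) + (-(B/2))*x) with hg1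
  set g2 : ℝ → ℝ := fun x =>
    (1+x)^((3:ℝ)/4-1-1) * (1-x)^((1:ℝ)/4-1-1) * (-(3/8)*A)
      + (1+x)^((1:ℝ)/4-1-1) * (1-x)^((3:ℝ)/4-1-1) * (-(3/8)*B) with hg2
  have hFg : ∀ x ∈ Set.Ioo (-1:ℝ) 1, F x φ = g x := by
    intro x hx
    have h1 : (0:ℝ) < 1 + x := by linarith [hx.1]
    have h2 : (0:ℝ) < 1 - x := by linarith [hx.2]
    rw [hF, hg]
    simp only
    rw [show (1 - x^2 : ℝ) = (1+x)*(1-x) by ring,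
      Real.mul_rpow h1.le h2.le, Real.sqrt_eq_rpow, Real.sqrt_eq_rpow,
      show (3:ℝ)/4 = 1/4 + 1/2 by norm_num, Real.rpow_add h1, Real.rpow_add h2]
    rw [hA, hB]; ring
  have hdg : ∀ x ∈ Set.Ioo (-1:ℝ) 1, HasDerivAt g (g1 x) x := by
    intro x hx
    have h1 : (0:ℝ) < 1 + x := by linarith [hx.1]
    have h2 : (0:ℝ) < 1 - x := by linarith [hx.2]
    have d1 := aux_deriv ((3:ℝ)/4) ((1:ℝ)/4) (A/2) 0 x h1 h2
    have d2 := aux_deriv ((1:ℝ)/4) ((3:ℝ)/4) (B/2) 0 x h1 h2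
    have h := d1.add d2
    rw [hg1]; simp only
    refine HasDerivAt.congr_deriv h ?_
    ring
  have hdg1 : ∀ x ∈ Set.Ioo (-1:ℝ) 1, HasDerivAt g1 (g2 x) x := by
    intro x hx
    have h1 : (0:ℝ) < 1 + x := by linarith [hx.1]
    have h2 : (0:ℝ) < 1 - x := by linarith [hx.2]
    have d1 := aux_deriv ((3:ℝ)/4-1) ((1:ℝ)/4-1) (A/4) (-(A/2)) x h1 h2
    have d2 := aux_deriv ((1:ℝ)/4-1) ((3:ℝ)/4-1) (-(B/4)) (-(B/2)) x h1 h2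
    have h := d1.add d2
    rw [hg2]; simp only
    refine HasDerivAt.congr_deriv h ?_
    ring
  have hmem : Set.Ioo (-1:ℝ) 1 ∈ nhds z := isOpen_Ioo.mem_nhds ⟨hz1, hz2⟩
  have hev : (fun z' => F z' φ) =ᶠ[nhds z] g := Filter.eventuallyEq_of_mem hmem hFg
  have hd1 : deriv (fun z' => F z' φ) z = g1 z := by
    rw [hev.deriv_eq]
    exact (hdg z ⟨hz1, hz2⟩).deriv
  have hev2 : deriv (fun z' => F z' φ) =ᶠ[nhds z] g1 := by
    filter_upwards [hmem] with x hx
    have hevx : (fun z' => F z' φ) =ᶠ[nhds x] g :=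
      Filter.eventuallyEq_of_mem (isOpen_Ioo.mem_nhds hx) hFg
    rw [hevx.deriv_eq]
    exact (hdg x hx).deriv
  have hdd : deriv (deriv (fun z' => F z' φ)) z = g2 z := by
    rw [hev2.deriv_eq]
    exact (hdg1 z ⟨hz1, hz2⟩).deriv
  have hφd : HasDerivAt (fun φ' => F z φ')
      ((1/2)*(1-z^2)^((1:ℝ)/4)*(Real.sqrt (1+z) * (-B/2) + Real.sqrt (1-z) * (A/2))) φ := by
    have hc : HasDerivAt (fun t : ℝ => Real.cos (t/2)) (-Real.sin (φ/2) * (1/2)) φ :=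
      ((hasDerivAt_id' φ).div_const 2).cos
    have hs : HasDerivAt (fun t : ℝ => Real.sin (t/2)) (Real.cos (φ/2) * (1/2)) φ :=
      ((hasDerivAt_id' φ).div_const 2).sin
    have h := ((hc.sub hs).const_mul ((1/2)*(1-z^2)^((1:ℝ)/4)*Real.sqrt (1+z))).add
              ((hc.add hs).const_mul ((1/2)*(1-z^2)^((1:ℝ)/4)*Real.sqrt (1-z)))
    have hfun : (fun φ' => F z φ') = (fun t =>
        ((1/2)*(1-z^2)^((1:ℝ)/4)*Real.sqrt (1+z)) * (Real.cos (t/2) - Real.sin (t/2))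
        + ((1/2)*(1-z^2)^((1:ℝ)/4)*Real.sqrt (1-z)) * (Real.cos (t/2) + Real.sin (t/2))) := by
      funext t; rw [hF]; ring
    rw [hfun]
    refine HasDerivAt.congr_deriv h ?_
    rw [hA, hB]; ring
  rw [hd1, hdd, hφd.deriv, hF]
  rw [hdd] at hne
  rw [div_eq_iff hne]
  simp only [hg1, hg2]
  have hr : (0:ℝ) < (1+z) ^ ((1:ℝ)/4) := Real.rpow_pos_of_pos hu _
  have hs : (0:ℝ) < (1-z) ^ ((1:ℝ)/4) := Real.rpow_pos_of_pos hv _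
  set r : ℝ := (1+z) ^ ((1:ℝ)/4) with hrdef
  set s : ℝ := (1-z) ^ ((1:ℝ)/4) with hsdef
  have hr4 : r^4 = 1+z := by
    rw [hrdef, ← rpow_quarter (1+z) hu 1 4 (by norm_num), Real.rpow_one]
  have hs4 : s^4 = 1-z := by
    rw [hsdef, ← rpow_quarter (1-z) hv 1 4 (by norm_num), Real.rpow_one]
  have e1 : (1+z) ^ ((3:ℝ)/4) = r^3 := rpow_quarter (1+z) hu _ 3 (by norm_num)
  have e2 : (1-z) ^ ((3:ℝ)/4) = s^3 := rpow_quarter (1-z) hv _ 3 (by norm_num)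
  have e3 : (1+z) ^ ((3:ℝ)/4-1) = (r^1)⁻¹ := rpow_neg_quarter (1+z) hu _ 1 (by norm_num)
  have e4 : (1-z) ^ ((3:ℝ)/4-1) = (s^1)⁻¹ := rpow_neg_quarter (1-z) hv _ 1 (by norm_num)
  have e5 : (1+z) ^ ((1:ℝ)/4-1) = (r^3)⁻¹ := rpow_neg_quarter (1+z) hu _ 3 (by norm_num)
  have e6 : (1-z) ^ ((1:ℝ)/4-1) = (s^3)⁻¹ := rpow_neg_quarter (1-z) hv _ 3 (by norm_num)
  have e7 : (1+z) ^ ((3:ℝ)/4-1-1) = (r^5)⁻¹ := rpow_neg_quarter (1+z) hu _ 5 (by norm_num)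
  have e8 : (1-z) ^ ((3:ℝ)/4-1-1) = (s^5)⁻¹ := rpow_neg_quarter (1-z) hv _ 5 (by norm_num)
  have e9 : (1+z) ^ ((1:ℝ)/4-1-1) = (r^7)⁻¹ := rpow_neg_quarter (1+z) hu _ 7 (by norm_num)
  have e10 : (1-z) ^ ((1:ℝ)/4-1-1) = (s^7)⁻¹ := rpow_neg_quarter (1-z) hv _ 7 (by norm_num)
  have e11 : Real.sqrt (1+z) = r^2 := by
    rw [Real.sqrt_eq_rpow]; exact rpow_quarter (1+z) hu _ 2 (by norm_num)
  have e12 : Real.sqrt (1-z) = s^2 := by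
    rw [Real.sqrt_eq_rpow]; exact rpow_quarter (1-z) hv _ 2 (by norm_num)
  have e13 : Real.sqrt (1-z^2) = r^2 * s^2 := by
    rw [show (1-z^2:ℝ) = (1+z)*(1-z) by ring, Real.sqrt_mul hu.le, e11, e12]
  have e14 : (1-z^2) ^ ((1:ℝ)/4) = r * s := by
    rw [show (1-z^2:ℝ) = (1+z)*(1-z) by ring, Real.mul_rpow hu.le hv.le]
  have e15 : (1-z^2:ℝ) = r^4 * s^4 := by rw [hr4, hs4]; ring
  rw [e3, e4, e5, e6, e7, e8, e9, e10, e11, e12, e13, e14, ← hA, ← hB, e15]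
  have hzr : z = r^4 - 1 := by linarith [hr4]
  have hs2 : s^4 = 2 - r^4 := by rw [hs4, hzr]; ring
  rw [hzr]
  field_simp
  linear_combination 8*(r^2*A*(4-8*r^4) - 4*r^4*s^2*B) * hs2
end

section
/- With α = 2cos((φ-υ)/2) and β = 2sin((φ-υ)/2)cos²((υ+φ+π)/4), u = e^{iυ}, v = e^{iφ}, υ < φ < υ+2π, the polynomial Q(z) = (-z²+iαz+1)(z-u)(z-v) + β(u-v)z² factors as Q(z) = -(z-m)²(z-n)² where m, n are the roots of z² - μz + ρ with ρ = exp(i(υ+φ+π)/2) and μ = (1/2)(1-ρ^{-1})(u+v); in particular Q has exactly two distinct roots, each of multiplicity two, both on the unit circle. -/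
open Complex

set_option maxHeartbeats 1600000 in
/-- With the coefficients `α`, `β` of the observable, the polynomial `Q`
factors as `-(z-m)²(z-n)²` where `m`, `n` are the roots of `z² - μz + ρ`;
the two roots are distinct and lie on the unit circle. -/
theorem stmt_15 (υ φ : ℝ) (hlt : υ < φ) (hlt2 : φ < υ + 2 * Real.pi)
    (u v ρ μ m n : ℂ) (α β : ℝ)
    (hu : u = Complex.exp (Complex.I * υ))
    (hv : v = Complex.exp (Complex.I * φ))
    (hα : (α : ℝ) = 2 * Real.cos ((φ - υ) / 2))
    (hβ : (β : ℝ) = 2 * Real.sin ((φ - υ) / 2) * Real.cos ((υ + φ + Real.pi) / 4) ^ 2)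
    (hρ : ρ = Complex.exp (Complex.I * ((υ + φ + Real.pi) / 2)))
    (hμ : μ = (1 / 2) * (1 - ρ⁻¹) * (u + v))
    (hsum : m + n = μ) (hprod : m * n = ρ) :
    (∀ z : ℂ,
      (-z ^ 2 + Complex.I * (α : ℂ) * z + 1) * (z - u) * (z - v)
          + (β : ℂ) * (u - v) * z ^ 2
        = -((z - m) ^ 2 * (z - n) ^ 2)) ∧
    m ≠ n ∧ ‖m‖ = 1 ∧ ‖n‖ = 1 := by
  have hπ := Real.pi_pos
  set δ : ℝ := (φ - υ) / 2 with hδ_def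
  set θ : ℝ := (υ + φ + Real.pi) / 4 with hθ_def
  set A : ℂ := Complex.exp (Complex.I * (((υ + Real.pi) / 2 : ℝ) : ℂ)) with hA_def
  set b : ℂ := Complex.exp (Complex.I * ((φ / 2 : ℝ) : ℂ)) with hb_def
  set w : ℂ := Complex.exp (Complex.I * (θ : ℂ)) with hw_def
  have hA0 : A ≠ 0 := Complex.exp_ne_zero _
  have hb0 : b ≠ 0 := Complex.exp_ne_zero _
  have hw0 : w ≠ 0 := Complex.exp_ne_zero _
  have hI2 : Complex.exp (Complex.I * ((Real.pi / 2 : ℝ) : ℂ)) = Complex.I := by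
    rw [mul_comm, Complex.exp_mul_I]
    push_cast
    rw [Complex.cos_pi_div_two, Complex.sin_pi_div_two]
    ring
  have hcosE : ∀ t : ℝ, ((Real.cos t : ℂ))
      = (Complex.exp (Complex.I * t) + (Complex.exp (Complex.I * t))⁻¹) / 2 := by
    intro t
    rw [Complex.ofReal_cos, Complex.cos, ← Complex.exp_neg]
    ring_nf
  have hsinE : ∀ t : ℝ, ((Real.sin t : ℂ))
      = ((Complex.exp (Complex.I * t))⁻¹ - Complex.exp (Complex.I * t)) * Complex.I / 2 := by
    intro t
    rw [Complex.ofReal_sin, Complex.sin, ← Complex.exp_neg]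
    ring_nf
  have habs : ∀ t : ℝ, ‖Complex.exp (Complex.I * t)‖ = 1 := by
    intro t; rw [mul_comm]; exact Complex.norm_exp_ofReal_mul_I t
  -- basic exponential identities
  have hu2 : u = -A ^ 2 := by
    rw [hA_def, sq, ← Complex.exp_add,
      show Complex.I * (((υ + Real.pi) / 2 : ℝ) : ℂ) + Complex.I * (((υ + Real.pi) / 2 : ℝ) : ℂ)
          = Complex.I * (υ : ℂ) + (Real.pi : ℂ) * Complex.I from by push_cast; ring,
      Complex.exp_add, Complex.exp_pi_mul_I, hu]
    ring
  have hv2 : v = b ^ 2 := by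
    rw [hv, show Complex.I * (φ : ℂ) = Complex.I * ((φ / 2 : ℝ) : ℂ) + Complex.I * ((φ / 2 : ℝ) : ℂ)
      from by push_cast; ring, Complex.exp_add, hb_def]
    ring
  have hρ2 : ρ = A * b := by
    rw [hρ, show Complex.I * (((υ : ℂ) + (φ : ℂ) + (Real.pi : ℂ)) / 2)
        = Complex.I * (((υ + Real.pi) / 2 : ℝ) : ℂ) + Complex.I * ((φ / 2 : ℝ) : ℂ)
      from by push_cast; ring, Complex.exp_add, hA_def, hb_def]
  have hw2 : w ^ 2 = A * b := by
    rw [← hρ2, hρ, hw_def, sq, ← Complex.exp_add]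
    congr 1
    rw [hθ_def]
    push_cast
    ring
  -- δ-exponential
  have hδE : Complex.exp (Complex.I * (δ : ℂ)) = Complex.I * b * A⁻¹ := by
    rw [show Complex.I * (δ : ℂ)
        = Complex.I * ((Real.pi / 2 : ℝ) : ℂ) + Complex.I * ((φ / 2 : ℝ) : ℂ)
            + -(Complex.I * (((υ + Real.pi) / 2 : ℝ) : ℂ))
      from by rw [hδ_def]; push_cast; ring, Complex.exp_add, Complex.exp_add, Complex.exp_neg,
      hI2, hA_def, hb_def]
  have hδinv : (Complex.I * b * A⁻¹)⁻¹ = -(Complex.I * A * b⁻¹) := by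
    rw [mul_inv, mul_inv, Complex.inv_I, inv_inv]
    ring
  -- trig values in terms of A, b, w
  have hIα : Complex.I * (α : ℂ) = A * b⁻¹ - b * A⁻¹ := by
    have h1 : (α : ℂ) = Complex.I * b * A⁻¹ + -(Complex.I * A * b⁻¹) := by
      calc (α : ℂ) = 2 * ((Real.cos δ : ℂ)) := by rw [hα]; push_cast; ring
      _ = _ := by rw [hcosE, hδE, hδinv]; ring
    rw [h1, show Complex.I * (Complex.I * b * A⁻¹ + -(Complex.I * A * b⁻¹))
        = Complex.I * Complex.I * (b * A⁻¹ - A * b⁻¹) from by ring, Complex.I_mul_I]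
    ring
  have hsinδ : ((Real.sin δ : ℂ)) = (A * b⁻¹ + b * A⁻¹) / 2 := by
    rw [hsinE, hδE, hδinv,
      show (-(Complex.I * A * b⁻¹) - Complex.I * b * A⁻¹) * Complex.I / 2
        = Complex.I * Complex.I * (-(A * b⁻¹) - b * A⁻¹) / 2 from by ring, Complex.I_mul_I]
    ring
  have hcosδ : ((Real.cos δ : ℂ)) = Complex.I * (b * A⁻¹ - A * b⁻¹) / 2 := by
    rw [hcosE, hδE, hδinv]
    ring
  have hcos2θ : ((Real.cos θ : ℂ)) ^ 2 = (A * b + 2 + (A * b)⁻¹) / 4 := by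
    rw [hcosE, ← hw_def, ← hw2,
      show ((w + w⁻¹) / 2) ^ 2 = (w ^ 2 + 2 + (w ^ 2)⁻¹) / 4 from by field_simp; ring]
  have hβc : (β : ℂ) = (A ^ 2 + b ^ 2) * (A * b + 1) ^ 2 / (2 * A * b) ^ 2 := by
    calc (β : ℂ) = 2 * ((Real.sin δ : ℂ)) * ((Real.cos θ : ℂ)) ^ 2 := by
          rw [hβ]; push_cast; ring
    _ = 2 * ((A * b⁻¹ + b * A⁻¹) / 2) * ((A * b + 2 + (A * b)⁻¹) / 4) := by
          rw [hsinδ, hcos2θ]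
    _ = _ := by field_simp; ring
  have hμ2 : μ = (A * b - 1) * (b ^ 2 - A ^ 2) / (2 * A * b) := by
    rw [hμ, hρ2, hu2, hv2]
    field_simp
    ring
  -- the polynomial identity
  have hpoly : ∀ z : ℂ,
      (-z ^ 2 + Complex.I * (α : ℂ) * z + 1) * (z - u) * (z - v)
          + (β : ℂ) * (u - v) * z ^ 2
        = -((z - m) ^ 2 * (z - n) ^ 2) := by
    intro z
    have hRHS : (z - m) ^ 2 * (z - n) ^ 2 = (z ^ 2 - μ * z + ρ) ^ 2 := by
      rw [← hsum, ← hprod]; ring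
    rw [hRHS, hIα, hβc, hu2, hv2, hμ2, hρ2]
    field_simp
    ring
  refine ⟨hpoly, ?_⟩
  -- bounds
  have hδ0 : 0 < δ := by rw [hδ_def]; linarith
  have hδπ : δ < Real.pi := by rw [hδ_def]; linarith
  have hcos1 : Real.cos δ < 1 := by
    have h := Real.cos_lt_cos_of_nonneg_of_le_pi le_rfl (le_of_lt hδπ) hδ0
    rwa [Real.cos_zero] at h
  have hcosm1 : -1 < Real.cos δ := by
    have h := Real.cos_lt_cos_of_nonneg_of_le_pi (le_of_lt hδ0) le_rfl hδπ
    rwa [Real.cos_pi] at h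
  have hcosabs : |Real.cos δ| < 1 := abs_lt.mpr ⟨by linarith, hcos1⟩
  have hyabs : |Real.sin θ * Real.cos δ| < 1 := by
    rw [abs_mul]
    calc |Real.sin θ| * |Real.cos δ| ≤ 1 * |Real.cos δ| :=
          mul_le_mul_of_nonneg_right (Real.abs_sin_le_one θ) (abs_nonneg _)
    _ = |Real.cos δ| := one_mul _
    _ < 1 := hcosabs
  obtain ⟨hylb, hyub⟩ := abs_lt.mp hyabs
  set x : ℝ := Real.arccos (Real.sin θ * Real.cos δ) with hx_def
  have hcosx : Real.cos x = Real.sin θ * Real.cos δ :=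
    Real.cos_arccos (by linarith) (by linarith)
  have hx0 : 0 < x := by
    rcases lt_or_eq_of_le (Real.arccos_nonneg (Real.sin θ * Real.cos δ)) with h | h
    · exact h
    · exfalso; have := Real.arccos_eq_zero.mp h.symm; linarith
  have hxπ : x < Real.pi := by
    rcases lt_or_eq_of_le (Real.arccos_le_pi (Real.sin θ * Real.cos δ)) with h | h
    · exact h
    · exfalso; have := Real.arccos_eq_pi.mp h; linarith
  -- the explicit roots
  set m₀ : ℂ := Complex.exp (Complex.I * ((θ + x : ℝ) : ℂ)) with hm₀_def
  set n₀ : ℂ := Complex.exp (Complex.I * ((θ - x : ℝ) : ℂ)) with hn₀_def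
  set X : ℂ := Complex.exp (Complex.I * ((x : ℝ) : ℂ)) with hX_def
  have hX0 : X ≠ 0 := Complex.exp_ne_zero _
  have hm₀X : m₀ = w * X := by
    rw [hm₀_def, show Complex.I * ((θ + x : ℝ) : ℂ)
        = Complex.I * (θ : ℂ) + Complex.I * ((x : ℝ) : ℂ) from by push_cast; ring,
      Complex.exp_add, hw_def, hX_def]
  have hn₀X : n₀ = w * X⁻¹ := by
    rw [hn₀_def, show Complex.I * ((θ - x : ℝ) : ℂ)
        = Complex.I * (θ : ℂ) + -(Complex.I * ((x : ℝ) : ℂ)) from by push_cast; ring,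
      Complex.exp_add, Complex.exp_neg, hw_def, hX_def]
  have hprod₀ : m₀ * n₀ = ρ := by
    rw [hm₀_def, hn₀_def, ← Complex.exp_add, hρ]
    congr 1
    rw [hθ_def]
    push_cast
    ring
  have hXcos : X + X⁻¹ = 2 * ((Real.cos x : ℂ)) := by
    rw [hcosE, ← hX_def]
    ring
  have hsinθ : ((Real.sin θ : ℂ)) = (w⁻¹ - w) * Complex.I / 2 := by
    rw [hsinE, ← hw_def]
  have hwsin : w * ((Real.sin θ : ℂ)) = (1 - A * b) * Complex.I / 2 := by
    have h1 : w * ((w⁻¹ - w) * Complex.I / 2) = (1 - w ^ 2) * Complex.I / 2 := by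
      field_simp
    rw [hsinθ, h1, hw2]
  have hsum₀ : m₀ + n₀ = μ := by
    calc m₀ + n₀ = w * (X + X⁻¹) := by rw [hm₀X, hn₀X]; ring
    _ = 2 * (w * ((Real.sin θ : ℂ))) * ((Real.cos δ : ℂ)) := by
          rw [hXcos, hcosx]; push_cast; ring
    _ = 2 * ((1 - A * b) * Complex.I / 2) * (Complex.I * (b * A⁻¹ - A * b⁻¹) / 2) := by
          rw [hwsin, hcosδ]
    _ = Complex.I * Complex.I * ((1 - A * b) * (b * A⁻¹ - A * b⁻¹) / 2) := by ring
    _ = -((1 - A * b) * (b * A⁻¹ - A * b⁻¹) / 2) := by rw [Complex.I_mul_I]; ring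
    _ = μ := by rw [hμ2]; field_simp; ring
  -- distinctness of the explicit roots
  have hne₀ : m₀ ≠ n₀ := by
    intro h
    rw [hm₀_def, hn₀_def, Complex.exp_eq_exp_iff_exists_int] at h
    obtain ⟨k, hk⟩ := h
    have hk2 : Complex.I * ((θ + x : ℝ) : ℂ)
        = Complex.I * (((θ - x : ℝ) : ℂ) + (k : ℂ) * (2 * (Real.pi : ℂ))) := by
      rw [hk]; ring
    have hk3 := mul_left_cancel₀ Complex.I_ne_zero hk2
    have hk4 : (θ + x : ℝ) = (θ - x) + (k : ℝ) * (2 * Real.pi) := by exact_mod_cast hk3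
    rcases (by omega : (1 : ℤ) ≤ k ∨ k ≤ 0) with h1 | h1
    · have h1' : (1 : ℝ) ≤ (k : ℝ) := by exact_mod_cast h1
      nlinarith
    · have h1' : ((k : ℝ)) ≤ 0 := by exact_mod_cast h1
      nlinarith
  -- m and n are the explicit roots
  have hmcase : m = m₀ ∨ m = n₀ := by
    have hq : (m - m₀) * (m - n₀) = 0 := by
      linear_combination (-m) * hsum₀ + m * hsum + hprod₀ - hprod
    rcases mul_eq_zero.mp hq with h | h
    · exact Or.inl (sub_eq_zero.mp h)
    · exact Or.inr (sub_eq_zero.mp h)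
  have hncase : n = m₀ ∨ n = n₀ := by
    have hq : (n - m₀) * (n - n₀) = 0 := by
      linear_combination (-n) * hsum₀ + n * hsum + hprod₀ - hprod
    rcases mul_eq_zero.mp hq with h | h
    · exact Or.inl (sub_eq_zero.mp h)
    · exact Or.inr (sub_eq_zero.mp h)
  have hmn : m ≠ n := by
    intro hmn
    have h0 : m - n = 0 := sub_eq_zero.mpr hmn
    have hsq : (m₀ - n₀) ^ 2 = 0 := by
      linear_combination (m₀ + n₀ + μ) * hsum₀ - 4 * hprod₀ - (m + n + μ) * hsum + 4 * hprod
        + (m - n) * h0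
    exact hne₀ (sub_eq_zero.mp (sq_eq_zero_iff.mp hsq))
  refine ⟨hmn, ?_, ?_⟩
  · rcases hmcase with h | h
    · rw [h, hm₀_def]; exact habs (θ + x)
    · rw [h, hn₀_def]; exact habs (θ - x)
  · rcases hncase with h | h
    · rw [h, hm₀_def]; exact habs (θ + x)
    · rw [h, hn₀_def]; exact habs (θ - x)
end
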